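/- Every finite multi-objective Markov game has at least one Pareto Correlated Equilibrium. -/

import Mathlib

open Finset

/-- A finite-horizon `N`-player multi-objective Markov game with `M` objectives,
horizon `H`, finite state space `S` and finite action sets `A j`. -/
structure MOMG (N M H : ℕ) (S : Type) (A : Fin N → Type) [Fintype S]
    [∀ j, Fintype (A j)] where
  /-- transition kernels `P_h : S × A → Δ(S)` -/
  P : Fin H → S → ((j : Fin N) → A j) → S → ℝ
  P_nonneg : ∀ h s a s', 0 ≤ P h s a s'
  P_sum_one : ∀ h s a, ∑ s', P h s a s' = 1
  /-- vector rewards `r_{j,h} : S × A → [0,1]^M` -/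
  r : Fin N → Fin H → S → ((j : Fin N) → A j) → Fin M → ℝ
  r_nonneg : ∀ j h s a i, 0 ≤ r j h s a i
  r_le_one : ∀ j h s a i, r j h s a i ≤ 1

variable {N M H : ℕ} {S : Type} {A : Fin N → Type} [Fintype S] [∀ j, Fintype (A j)]

/-- A Markov stochastic policy: a decision rule `S → Δ(α)` for each step. -/
def IsPolicy {H : ℕ} {S α : Type} [Fintype α] (ρ : Fin H → S → α → ℝ) : Prop :=
  ∀ h s, (∀ a, 0 ≤ ρ h s a) ∧ ∑ a, ρ h s a = 1

/-- A product policy: each agent plays a Markov stochastic policy. -/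
def IsProductPolicy (π : (j : Fin N) → Fin H → S → A j → ℝ) : Prop :=
  ∀ j, IsPolicy (π j)

/-- Value vector of agent `k` under the product policy `π`, computed by backward
recursion on the number `t` of remaining steps; step index is `H - t`. -/
noncomputable def Vvec (G : MOMG N M H S A) (k : Fin N)
    (π : (j : Fin N) → Fin H → S → A j → ℝ) : ℕ → S → Fin M → ℝ
  | 0, _, _ => 0
  | (t+1), s, i =>
    if ht : H - (t+1) < H then
      ∑ a : (j : Fin N) → A j, (∏ j, π j ⟨H - (t+1), ht⟩ s (a j)) *
        (G.r k ⟨H - (t+1), ht⟩ s a i +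
          ∑ s', G.P ⟨H - (t+1), ht⟩ s a s' * Vvec G k π t s' i)
    else 0

/-- `V_{k,1}^π(s_1) ∈ ℝ^M`. -/
noncomputable def ValueVec (G : MOMG N M H S A) (k : Fin N)
    (π : (j : Fin N) → Fin H → S → A j → ℝ) (s1 : S) : Fin M → ℝ :=
  fun i => Vvec G k π H s1 i

/-- `u` Pareto dominates `v`. -/
def ParetoDom {M : ℕ} (u v : Fin M → ℝ) : Prop :=
  (∀ i, v i ≤ u i) ∧ ∃ i, v i < u i

/-- `u` strictly Pareto dominates `v`. -/
def StrictParetoDom {M : ℕ} (u v : Fin M → ℝ) : Prop :=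
  ∀ i, v i < u i

/-- the closed probability simplex Δ_M -/
def InSimplex {M : ℕ} (l : Fin M → ℝ) : Prop :=
  (∀ i, 0 ≤ l i) ∧ ∑ i, l i = 1

/-- the relative interior Δ_M^o of the simplex -/
def InOpenSimplex {M : ℕ} (l : Fin M → ℝ) : Prop :=
  (∀ i, 0 < l i) ∧ ∑ i, l i = 1

/-- Pareto-Nash Equilibrium: no agent has a unilateral (Markov stochastic)
deviation whose value vector Pareto dominates its value under `π`. -/
def IsPNE (G : MOMG N M H S A) (s1 : S)
    (π : (j : Fin N) → Fin H → S → A j → ℝ) : Prop :=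
  ∀ k, ∀ ρ : Fin H → S → A k → ℝ, IsPolicy ρ →
    ¬ ParetoDom (ValueVec G k (Function.update π k ρ) s1) (ValueVec G k π s1)

/-- Weak Pareto-Nash Equilibrium: no unilateral deviation strictly Pareto
dominates. -/
def IsWPNE (G : MOMG N M H S A) (s1 : S)
    (π : (j : Fin N) → Fin H → S → A j → ℝ) : Prop :=
  ∀ k, ∀ ρ : Fin H → S → A k → ℝ, IsPolicy ρ →
    ¬ StrictParetoDom (ValueVec G k (Function.update π k ρ) s1) (ValueVec G k π s1)

/-- Nash equilibrium of the linearly scalarized game `G_Λ`. -/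
def IsScalarizedNE (G : MOMG N M H S A) (s1 : S) (lam : Fin N → Fin M → ℝ)
    (π : (j : Fin N) → Fin H → S → A j → ℝ) : Prop :=
  ∀ k, ∀ ρ : Fin H → S → A k → ℝ, IsPolicy ρ →
    ∑ i, lam k i * ValueVec G k (Function.update π k ρ) s1 i ≤
      ∑ i, lam k i * ValueVec G k π s1 i
/-- Histories: `Hist S JA h` records `s_1, a_1, s_2, …, a_h, s_{h+1}` (the
history available at step `h+1`, 0-indexed: `Hist S JA 0 = S`). -/
def Hist (S JA : Type) : ℕ → Type
  | 0 => S
  | h + 1 => Hist S JA h × JA × S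

/-- The current (last) state of a history. -/
def lastState {S JA : Type} : (h : ℕ) → Hist S JA h → S
  | 0, s => s
  | _ + 1, x => x.2.2

/-- A history-dependent joint (possibly correlated) policy: at each step `h` it
assigns a distribution over joint actions given the history. -/
def IsHistJointPolicy
    (σ : (h : Fin H) → Hist S ((j : Fin N) → A j) h.1 → ((j : Fin N) → A j) → ℝ) :
    Prop :=
  ∀ h hist, (∀ a, 0 ≤ σ h hist a) ∧ ∑ a, σ h hist a = 1

/-- Value vector of agent `j` under a history-dependent joint policy `σ`,
from a history of length `h`. -/
noncomputable def VvecH (G : MOMG N M H S A) (j : Fin N)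
    (σ : (h : Fin H) → Hist S ((j' : Fin N) → A j') h.1 → ((j' : Fin N) → A j') → ℝ) :
    (h : ℕ) → Hist S ((j' : Fin N) → A j') h → Fin M → ℝ := fun h hist i =>
  if hlt : h < H then
    ∑ a : (j' : Fin N) → A j', σ ⟨h, hlt⟩ hist a *
      (G.r j ⟨h, hlt⟩ (lastState h hist) a i +
        ∑ s', G.P ⟨h, hlt⟩ (lastState h hist) a s' *
          VvecH G j σ (h + 1) (hist, a, s') i)
  else 0
termination_by h => H - h

/-- The history-dependent joint policy induced by a Markov product policy. -/
def toHistPolicy (π : (j : Fin N) → Fin H → S → A j → ℝ) :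
    (h : Fin H) → Hist S ((j : Fin N) → A j) h.1 → ((j : Fin N) → A j) → ℝ :=
  fun h hist a => ∏ j, π j h (lastState h.1 hist) (a j)

/-- A stochastic modification for agent `k`: given the history and the sampled
action of agent `k`, a distribution over replacement actions. -/
def IsModification {k : Fin N}
    (φ : (h : Fin H) → Hist S ((j : Fin N) → A j) h.1 → A k → A k → ℝ) : Prop :=
  ∀ h hist b, (∀ a, 0 ≤ φ h hist b a) ∧ ∑ a, φ h hist b a = 1

/-- The modified joint policy `φ ∘ σ`: sample a joint action from `σ`, then
resample agent `k`'s component according to `φ`. -/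
noncomputable def modifyPolicy (k : Fin N)
    (σ : (h : Fin H) → Hist S ((j : Fin N) → A j) h.1 → ((j : Fin N) → A j) → ℝ)
    (φ : (h : Fin H) → Hist S ((j : Fin N) → A j) h.1 → A k → A k → ℝ) :
    (h : Fin H) → Hist S ((j : Fin N) → A j) h.1 → ((j : Fin N) → A j) → ℝ :=
  fun h hist a => ∑ b : A k, σ h hist (Function.update a k b) * φ h hist b (a k)

/-- A history-dependent stochastic policy for a single agent `k`. -/
def IsHistPolicy {k : Fin N}
    (ρ : (h : Fin H) → Hist S ((j : Fin N) → A j) h.1 → A k → ℝ) : Prop :=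
  ∀ h hist, (∀ a, 0 ≤ ρ h hist a) ∧ ∑ a, ρ h hist a = 1

/-- The joint policy in which agent `k` unilaterally deviates to the
history-dependent policy `ρ` while every other agent `j ≠ k` plays `π j`. -/
noncomputable def deviateHist (k : Fin N)
    (π : (j : Fin N) → Fin H → S → A j → ℝ)
    (ρ : (h : Fin H) → Hist S ((j : Fin N) → A j) h.1 → A k → ℝ) :
    (h : Fin H) → Hist S ((j : Fin N) → A j) h.1 → ((j : Fin N) → A j) → ℝ :=
  fun h hist a =>
    ρ h hist (a k) * ∏ j ∈ Finset.univ.erase k, π j h (lastState h.1 hist) (a j)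



theorem simplex_isCompact {X : Type} [Fintype X] :
    IsCompact {p : X → ℝ | (∀ x, 0 ≤ p x) ∧ ∑ x, p x = 1} := by
  have h1 : IsCompact (Set.pi Set.univ (fun _ : X => Set.Icc (0:ℝ) 1)) :=
    isCompact_univ_pi fun _ => isCompact_Icc
  refine h1.of_isClosed_subset ?_ ?_
  · have hc1 : IsClosed {p : X → ℝ | ∀ x, 0 ≤ p x} := by
      have : {p : X → ℝ | ∀ x, 0 ≤ p x} = ⋂ x, {p : X → ℝ | 0 ≤ p x} := by
        ext p; simp [Set.mem_iInter]
      rw [this]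
      exact isClosed_iInter fun x => isClosed_le continuous_const (continuous_apply x)
    have hc2 : IsClosed {p : X → ℝ | ∑ x, p x = 1} :=
      isClosed_eq (continuous_finset_sum _ fun x _ => continuous_apply x) continuous_const
    exact hc1.inter hc2
  · rintro p ⟨h0, h1'⟩ x _
    refine ⟨h0 x, ?_⟩
    calc p x ≤ ∑ x', p x' := Finset.single_le_sum (fun x' _ => h0 x') (mem_univ x)
    _ = 1 := h1'

/-- Minimax alternative via separation. -/
theorem lemA {X Y : Type} [Fintype X] [Fintype Y] [Nonempty X] [Nonempty Y] (f : X → Y → ℝ)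
    (hyp : ∀ q : Y → ℝ, (∀ y, 0 ≤ q y) → ∑ y, q y = 1 →
      ∃ p : X → ℝ, (∀ x, 0 ≤ p x) ∧ ∑ x, p x = 1 ∧ 0 ≤ ∑ x, p x * ∑ y, q y * f x y) :
    ∃ p : X → ℝ, (∀ x, 0 ≤ p x) ∧ ∑ x, p x = 1 ∧ ∀ y, 0 ≤ ∑ x, p x * f x y := by
  classical
  by_contra hcon
  push_neg at hcon
  set Δ : Set (X → ℝ) := {p | (∀ x, 0 ≤ p x) ∧ ∑ x, p x = 1} with hΔ
  set Φ : (X → ℝ) → (Y → ℝ) := fun p y => ∑ x, p x * f x y with hΦ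
  have hΦcont : Continuous Φ :=
    continuous_pi fun y => continuous_finset_sum _ fun x _ => (continuous_apply x).mul continuous_const
  set K : Set (Y → ℝ) := Φ '' Δ with hK
  have hKcompact : IsCompact K := (simplex_isCompact).image hΦcont
  have hKconvex : Convex ℝ K := by
    rintro w1 ⟨p1, ⟨hp10, hp11⟩, rfl⟩ w2 ⟨p2, ⟨hp20, hp21⟩, rfl⟩ a b ha hb hab
    refine ⟨a • p1 + b • p2, ⟨fun x => ?_, ?_⟩, ?_⟩
    · have := hp10 x; have := hp20 x
      simp only [Pi.add_apply, Pi.smul_apply, smul_eq_mul]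
      nlinarith
    · simp only [Pi.add_apply, Pi.smul_apply, smul_eq_mul, Finset.sum_add_distrib,
        ← Finset.mul_sum, hp11, hp21]
      linarith
    · funext y
      simp only [Φ, Pi.add_apply, Pi.smul_apply, smul_eq_mul, add_mul, mul_assoc,
        Finset.sum_add_distrib, ← Finset.mul_sum]
  set O : Set (Y → ℝ) := {w | ∀ y, 0 ≤ w y} with hO
  have hOclosed : IsClosed O := by
    have : O = ⋂ y, {w : Y → ℝ | 0 ≤ w y} := by ext w; simp [hO, Set.mem_iInter]
    rw [this]
    exact isClosed_iInter fun y => isClosed_le continuous_const (continuous_apply y)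
  have hOconvex : Convex ℝ O := by
    rintro w1 hw1 w2 hw2 a b ha hb hab y
    have := hw1 y; have := hw2 y
    simp only [Pi.add_apply, Pi.smul_apply, smul_eq_mul]
    nlinarith
  have hdisj : Disjoint O K := by
    rw [Set.disjoint_right]
    rintro w ⟨p, ⟨hp0, hp1⟩, rfl⟩ hwO
    obtain ⟨y, hy⟩ := hcon p hp0 hp1
    exact absurd (hwO y) (not_le.mpr hy)
  obtain ⟨ℓ, u, v, hOlt, huv, hKgt⟩ :=
    geometric_hahn_banach_closed_compact hOconvex hOclosed hKconvex hKcompact hdisj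
  have h0O : (0 : Y → ℝ) ∈ O := fun y => le_refl 0
  have hupos : (0:ℝ) < u := by have := hOlt 0 h0O; rwa [map_zero] at this
  have hvpos : (0:ℝ) < v := hupos.trans huv
  set c : Y → ℝ := fun y => ℓ (Pi.single y (1:ℝ)) with hc
  have hcnonpos : ∀ y, c y ≤ 0 := by
    intro y
    by_contra hpos
    push_neg at hpos
    have hmem : ((u+1)/c y) • (Pi.single y 1 : Y → ℝ) ∈ O := by
      intro z
      have h1 : (0:ℝ) ≤ (Pi.single y 1 : Y → ℝ) z := by
        rcases eq_or_ne y z with rfl | hne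
        · simp
        · simp [Pi.single_apply, hne]
      have h2 : (0:ℝ) ≤ (u+1)/c y := by positivity
      simpa using mul_nonneg h2 h1
    have hlt := hOlt _ hmem
    rw [map_smul, smul_eq_mul] at hlt
    have hceq : ℓ (Pi.single y 1 : Y → ℝ) = c y := rfl
    rw [hceq, div_mul_cancel₀ _ (ne_of_gt hpos)] at hlt
    linarith
  have hℓeq : ∀ w : Y → ℝ, ℓ w = ∑ y, w y * c y := by
    intro w
    have hw : w = ∑ y, w y • (Pi.single y 1 : Y → ℝ) := by
      funext z
      rw [Finset.sum_apply]
      simp [Pi.single_apply, mul_ite, Finset.sum_ite_eq']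
    conv_lhs => rw [hw]
    rw [map_sum]
    exact Finset.sum_congr rfl fun y _ => by rw [map_smul, smul_eq_mul]
  have hcard : (0:ℝ) < (Fintype.card X : ℝ) := by exact_mod_cast Fintype.card_pos
  set p0 : X → ℝ := fun _ => (Fintype.card X : ℝ)⁻¹ with hp0def
  have hp0Δ : p0 ∈ Δ := by
    refine ⟨fun x => by positivity, ?_⟩
    rw [Finset.sum_const, Finset.card_univ, nsmul_eq_mul, mul_inv_cancel₀ (ne_of_gt hcard)]
  have hb0pos : 0 < ℓ (Φ p0) := hvpos.trans (hKgt _ ⟨p0, hp0Δ, rfl⟩)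
  have hcne : ∃ y, c y < 0 := by
    by_contra hall
    push_neg at hall
    have hz : ∀ y, c y = 0 := fun y => le_antisymm (hcnonpos y) (hall y)
    have : ℓ (Φ p0) = 0 := by rw [hℓeq]; simp [hz]
    linarith
  have hsneg : ∑ y, c y < 0 := by
    obtain ⟨y0, hy0⟩ := hcne
    calc ∑ y, c y < ∑ _y : Y, (0:ℝ) :=
      Finset.sum_lt_sum (fun y _ => hcnonpos y) ⟨y0, mem_univ y0, hy0⟩
    _ = 0 := by simp
  set s : ℝ := ∑ y, c y with hs
  set q : Y → ℝ := fun y => c y / s with hq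
  have hq0 : ∀ y, 0 ≤ q y := by
    intro y
    have := div_nonneg (neg_nonneg.mpr (hcnonpos y)) (neg_nonneg.mpr hsneg.le)
    rwa [neg_div_neg_eq] at this
  have hq1 : ∑ y, q y = 1 := by
    rw [hq]
    rw [← Finset.sum_div, ← hs, div_self (ne_of_lt hsneg)]
  obtain ⟨p, hp0', hp1', hge⟩ := hyp q hq0 hq1
  have hpos : 0 < ℓ (Φ p) := hvpos.trans (hKgt _ ⟨p, ⟨hp0', hp1'⟩, rfl⟩)
  have hcalc : ∑ x, p x * ∑ y, q y * f x y = ℓ (Φ p) / s := by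
    rw [hℓeq, Finset.sum_div]
    simp only [Finset.mul_sum]
    rw [Finset.sum_comm]
    refine Finset.sum_congr rfl fun y _ => ?_
    have : Φ p y * c y / s = ∑ x, p x * f x y * (c y / s) := by
      rw [← Finset.sum_mul, mul_div_assoc]
    rw [this]
    exact Finset.sum_congr rfl fun x _ => by rw [hq]; ring
  rw [hcalc] at hge
  have : ℓ (Φ p) / s < 0 := div_neg_of_pos_of_neg hpos hsneg
  linarith

/-- Every nonnegative matrix with constant row sum `m` has a stationary distribution. -/
theorem exists_stationary {α : Type} [Fintype α] [Nonempty α] (Q : α → α → ℝ) (m : ℝ)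
    (hQ0 : ∀ i j, 0 ≤ Q i j) (hrow : ∀ i, ∑ j, Q i j = m) :
    ∃ μ : α → ℝ, (∀ i, 0 ≤ μ i) ∧ ∑ i, μ i = 1 ∧ ∀ j, ∑ i, μ i * Q i j = m * μ j := by
  classical
  have heq : ∀ (μ : α → ℝ) (j : α), ∑ i, μ i * (Q i j - (if i = j then m else 0))
      = ∑ i, μ i * Q i j - m * μ j := by
    intro μ j
    simp only [mul_sub, Finset.sum_sub_distrib, mul_ite, mul_zero]
    rw [Finset.sum_ite_eq' univ j (fun i => μ i * m)]
    simp [mul_comm]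
  have hhyp : ∀ q : α → ℝ, (∀ y, 0 ≤ q y) → ∑ y, q y = 1 →
      ∃ p : α → ℝ, (∀ x, 0 ≤ p x) ∧ ∑ x, p x = 1 ∧
        0 ≤ ∑ x, p x * ∑ y, q y * ((fun i j => Q i j - (if i = j then m else 0)) x y) := by
    intro q hq0 hq1
    obtain ⟨i0, _, hi0⟩ := Finset.exists_min_image univ q ⟨Classical.arbitrary α, mem_univ _⟩
    refine ⟨fun i => if i = i0 then 1 else 0, fun i => by positivity, by simp, ?_⟩
    simp only [ite_mul, one_mul, zero_mul]
    rw [Finset.sum_ite_eq' univ i0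
      (fun i => ∑ y, q y * (Q i y - (if i = y then m else 0)))]
    simp only [mem_univ, if_true]
    have h1 : ∑ y, q y * (Q i0 y - (if i0 = y then m else 0))
        = ∑ y, q y * Q i0 y - m * q i0 := by
      simp only [mul_sub, Finset.sum_sub_distrib, mul_ite, mul_zero]
      rw [show (∑ y, if i0 = y then q y * m else 0) = q i0 * m by
        rw [Finset.sum_ite_eq univ i0 (fun y => q y * m)]; simp]
      ring
    rw [h1]
    have h2 : m * q i0 = ∑ y, Q i0 y * q i0 := by rw [← Finset.sum_mul, hrow]
    have h3 : ∑ y, Q i0 y * q i0 ≤ ∑ y, q y * Q i0 y := by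
      refine Finset.sum_le_sum fun y _ => ?_
      rw [mul_comm (q y)]
      exact mul_le_mul_of_nonneg_left (hi0 y (mem_univ y)) (hQ0 i0 y)
    linarith
  obtain ⟨μ, hμ0, hμ1, hμ⟩ := lemA (fun i j => Q i j - (if i = j then m else 0)) hhyp
  · refine ⟨μ, hμ0, hμ1, ?_⟩
    have key : ∀ j, 0 ≤ ∑ i, μ i * Q i j - m * μ j := by
      intro j; have := hμ j; rwa [heq] at this
    have hsum : ∑ j, (∑ i, μ i * Q i j - m * μ j) = 0 := by
      rw [Finset.sum_sub_distrib, Finset.sum_comm]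
      simp only [← Finset.mul_sum, hrow]
      rw [← Finset.sum_mul, hμ1]
      ring
    have hz := (Finset.sum_eq_zero_iff_of_nonneg (fun j _ => key j)).mp hsum
    intro j
    have := hz j (mem_univ j)
    linarith

/-- Reindexing a double sum via the involution `(a, b) ↦ (update a k b, a k)`. -/
theorem sum_update_reindex {N : ℕ} {A : Fin N → Type} [∀ j, Fintype (A j)]
    [∀ j, DecidableEq (A j)] (k : Fin N)
    (F : ((j : Fin N) → A j) → A k → ℝ) :
    ∑ a, ∑ b, F a b = ∑ a, ∑ b, F (Function.update a k b) (a k) := by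
  rw [← Fintype.sum_prod_type', ← Fintype.sum_prod_type']
  exact Fintype.sum_equiv
    ⟨fun p => (Function.update p.1 k p.2, p.1 k),
     fun p => (Function.update p.1 k p.2, p.1 k),
     fun p => by simp [Function.update_idem, Function.update_eq_self],
     fun p => by simp [Function.update_idem, Function.update_eq_self]⟩
    (fun p => F p.1 p.2) (fun p => F (Function.update p.1 k p.2) (p.1 k))
    (fun p => by simp [Function.update_idem, Function.update_eq_self])

/-- A stochastic kernel is a mixture of deterministic maps. -/
theorem kernel_decomp {β : Type} [Fintype β] [DecidableEq β] (φ : β → β → ℝ)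
    (hφ1 : ∀ i, ∑ c, φ i c = 1) (i : β) (F : β → ℝ) :
    ∑ c, φ i c * F c = ∑ g : β → β, (∏ j, φ j (g j)) * F (g i) := by
  have key : ∀ g : β → β, (∏ j, φ j (g j)) * F (g i)
      = ∏ j, (φ j (g j) * (if j = i then F (g j) else 1)) := by
    intro g
    rw [Finset.prod_mul_distrib]
    congr 1
    rw [Finset.prod_ite_eq' univ i (fun j => F (g j))]
    simp
  calc ∑ c, φ i c * F c
      = ∏ j, ∑ c, φ j c * (if j = i then F c else 1) := by
        rw [← Finset.mul_prod_erase univ _ (mem_univ i)]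
        have h1 : ∑ c, φ i c * (if i = i then F c else 1) = ∑ c, φ i c * F c := by simp
        have h2 : ∏ j ∈ univ.erase i, (∑ c, φ j c * (if j = i then F c else 1)) = 1 := by
          refine Finset.prod_eq_one fun j hj => ?_
          have hne : j ≠ i := (Finset.mem_erase.mp hj).1
          simp [hne, hφ1 j]
        rw [h1, h2, mul_one]
    _ = ∑ g ∈ Fintype.piFinset (fun _ : β => univ),
          ∏ j, φ j (g j) * (if j = i then F (g j) else 1) :=
        Finset.prod_univ_sum _ _
    _ = ∑ g : β → β, (∏ j, φ j (g j)) * F (g i) := by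
        rw [Fintype.piFinset_univ]
        exact Finset.sum_congr rfl fun g _ => (key g).symm

/-- Existence of a correlated equilibrium in a finite game (Hart–Schmeidler). -/
theorem exists_CE {N : ℕ} (hN : 1 ≤ N) {A : Fin N → Type} [∀ j, Fintype (A j)]
    [∀ j, Nonempty (A j)] (u : (k : Fin N) → ((j : Fin N) → A j) → ℝ) :
    ∃ q : ((j : Fin N) → A j) → ℝ, (∀ a, 0 ≤ q a) ∧ ∑ a, q a = 1 ∧
      ∀ (k : Fin N) (g : A k → A k),
        ∑ a, q a * u k (Function.update a k (g (a k))) ≤ ∑ a, q a * u k a := by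
  classical
  haveI : Nonempty (Fin N) := ⟨⟨0, hN⟩⟩
  haveI : Nonempty ((k : Fin N) × (A k → A k)) := ⟨⟨⟨0, hN⟩, id⟩⟩
  set Y := (k : Fin N) × (A k → A k) with hY
  set f : ((j : Fin N) → A j) → Y → ℝ :=
    fun a y => u y.1 a - u y.1 (Function.update a y.1 (y.2 (a y.1))) with hf
  have hhyp : ∀ q : Y → ℝ, (∀ y, 0 ≤ q y) → ∑ y, q y = 1 →
      ∃ p : ((j : Fin N) → A j) → ℝ, (∀ x, 0 ≤ p x) ∧ ∑ x, p x = 1 ∧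
        0 ≤ ∑ x, p x * ∑ y, q y * f x y := by
    intro q hq0 hq1
    -- per-player transition matrices
    set Qm : (k : Fin N) → A k → A k → ℝ :=
      fun k i j => ∑ g : A k → A k, (if g i = j then q ⟨k, g⟩ else 0) with hQm
    set m : Fin N → ℝ := fun k => ∑ g : A k → A k, q ⟨k, g⟩ with hm
    have hQm0 : ∀ k (i j : A k), 0 ≤ Qm k i j := fun k i j =>
      Finset.sum_nonneg fun g _ => by by_cases h : g i = j <;> simp [h, hq0]
    have hQmrow : ∀ k (i : A k), ∑ j, Qm k i j = m k := by
      intro k i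
      rw [hQm, Finset.sum_comm]
      refine Finset.sum_congr rfl fun g _ => ?_
      rw [Finset.sum_ite_eq univ (g i) (fun _ => q ⟨k, g⟩)]
      simp
    -- stationary distributions
    choose μ hμ0 hμ1 hμstat using fun k =>
      exists_stationary (Qm k) (m k) (hQm0 k) (hQmrow k)
    set p : ((j : Fin N) → A j) → ℝ := fun a => ∏ k, μ k (a k) with hp
    have hp0 : ∀ a, 0 ≤ p a := fun a => Finset.prod_nonneg fun k _ => hμ0 k (a k)
    have hp1 : ∑ a, p a = 1 := by
      rw [hp, ← Fintype.piFinset_univ, ← Finset.prod_univ_sum]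
      simp [hμ1]
    refine ⟨p, hp0, hp1, ?_⟩
    -- the expected payoff is exactly zero
    have hswap : ∑ x, p x * ∑ y, q y * f x y = ∑ y : Y, q y * ∑ x, p x * f x y := by
      simp only [Finset.mul_sum]
      rw [Finset.sum_comm]
      exact Finset.sum_congr rfl fun y _ => Finset.sum_congr rfl fun x _ => by ring
    rw [hswap, ← Finset.univ_sigma_univ, Finset.sum_sigma]
    have claim : ∀ k : Fin N,
        ∑ g : A k → A k, q ⟨k, g⟩ * ∑ x, p x * u k (Function.update x k (g (x k)))
          = m k * ∑ x, p x * u k x := by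
      intro k
      set Pk : ((j : Fin N) → A j) → ℝ := fun x => ∏ j ∈ univ.erase k, μ j (x j) with hPk
      have hpfact : ∀ x, p x = μ k (x k) * Pk x := by
        intro x
        have hb : p x = ∏ j, μ j (x j) := rfl
        rw [hb, ← Finset.mul_prod_erase univ _ (mem_univ k)]
      have hpupd : ∀ (x : (j : Fin N) → A j) (b : A k),
          p (Function.update x k b) = μ k b * Pk x := by
        intro x b
        have hb : p (Function.update x k b) = ∏ j, μ j (Function.update x k b j) := rfl
        rw [hb, ← Finset.mul_prod_erase univ _ (mem_univ k), Function.update_self]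
        congr 1
        refine Finset.prod_congr rfl fun j hj => ?_
        rw [Function.update_of_ne (Finset.mem_erase.mp hj).1]
      have stepA : ∀ g : A k → A k,
          ∑ x, p x * u k (Function.update x k (g (x k)))
            = ∑ x, ∑ b, (if g b = x k then (μ k b * Pk x) * u k x else 0) := by
        intro g
        have e1 : ∀ x : (j : Fin N) → A j,
            p x * u k (Function.update x k (g (x k)))
              = ∑ b, (if g (x k) = b then p x * u k (Function.update x k b) else 0) := by
          intro x
          rw [Finset.sum_ite_eq univ (g (x k)) (fun b => p x * u k (Function.update x k b))]
          simp
        simp only [e1]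
        rw [sum_update_reindex k
          (fun x b => if g (x k) = b then p x * u k (Function.update x k b) else 0)]
        refine Finset.sum_congr rfl fun x _ => Finset.sum_congr rfl fun b _ => ?_
        rw [Function.update_self, Function.update_idem, Function.update_eq_self]
        by_cases hgb : g b = x k
        · rw [if_pos hgb, if_pos hgb, hpupd]
        · rw [if_neg hgb, if_neg hgb]
      calc ∑ g : A k → A k, q ⟨k, g⟩ * ∑ x, p x * u k (Function.update x k (g (x k)))
          = ∑ g : A k → A k, ∑ x, ∑ b,
              (if g b = x k then q ⟨k, g⟩ * ((μ k b * Pk x) * u k x) else 0) := by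
            refine Finset.sum_congr rfl fun g _ => ?_
            rw [stepA g, Finset.mul_sum]
            refine Finset.sum_congr rfl fun x _ => ?_
            rw [Finset.mul_sum]
            refine Finset.sum_congr rfl fun b _ => ?_
            rw [mul_ite, mul_zero]
        _ = ∑ x, ∑ b, (μ k b * Qm k b (x k)) * (Pk x * u k x) := by
            rw [Finset.sum_comm]
            refine Finset.sum_congr rfl fun x _ => ?_
            rw [Finset.sum_comm]
            refine Finset.sum_congr rfl fun b _ => ?_
            have hQmb : Qm k b (x k) = ∑ g : A k → A k, (if g b = x k then q ⟨k, g⟩ else 0) := rfl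
            rw [hQmb, Finset.mul_sum, Finset.sum_mul]
            refine Finset.sum_congr rfl fun g _ => ?_
            by_cases hgb : g b = x k
            · rw [if_pos hgb, if_pos hgb]; ring
            · rw [if_neg hgb, if_neg hgb]; ring
        _ = ∑ x, (m k * μ k (x k)) * (Pk x * u k x) := by
            refine Finset.sum_congr rfl fun x _ => ?_
            rw [← Finset.sum_mul, hμstat k (x k)]
        _ = m k * ∑ x, p x * u k x := by
            rw [Finset.mul_sum]
            refine Finset.sum_congr rfl fun x _ => ?_
            rw [hpfact x]; ring
    have hzero : ∀ k : Fin N,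
        ∑ g : A k → A k, q ⟨k, g⟩ * ∑ x, p x * f x ⟨k, g⟩ = 0 := by
      intro k
      have expand : ∀ g : A k → A k,
          q ⟨k, g⟩ * ∑ x, p x * f x ⟨k, g⟩
            = q ⟨k, g⟩ * ∑ x, p x * u k x
              - q ⟨k, g⟩ * ∑ x, p x * u k (Function.update x k (g (x k))) := by
        intro g
        have hfx : ∀ x, f x ⟨k, g⟩ = u k x - u k (Function.update x k (g (x k))) :=
          fun x => rfl
        simp only [hfx, mul_sub, Finset.sum_sub_distrib]
      rw [Finset.sum_congr rfl fun g _ => expand g, Finset.sum_sub_distrib,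
        claim k, ← Finset.sum_mul]
      have hmk : (∑ g : A k → A k, q ⟨k, g⟩) = m k := rfl
      rw [hmk]
      ring
    refine le_of_eq ?_
    rw [Finset.sum_congr rfl fun k _ => hzero k]
    simp
  obtain ⟨qq, hqq0, hqq1, hqqCE⟩ := lemA f hhyp
  refine ⟨qq, hqq0, hqq1, ?_⟩
  intro k g
  have := hqqCE ⟨k, g⟩
  rw [hf] at this
  simp only [mul_sub, Finset.sum_sub_distrib] at this
  linarith

/-- The CE property extends from deterministic swaps to stochastic kernels. -/
theorem CE_kernel {N : ℕ} {A : Fin N → Type} [∀ j, Fintype (A j)]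
    (q : ((j : Fin N) → A j) → ℝ) (hq0 : ∀ a, 0 ≤ q a)
    (u : ((j : Fin N) → A j) → ℝ) (k : Fin N)
    (hCE : ∀ g : A k → A k,
      ∑ a, q a * u (Function.update a k (g (a k))) ≤ ∑ a, q a * u a)
    (φ : A k → A k → ℝ) (hφ0 : ∀ i c, 0 ≤ φ i c) (hφ1 : ∀ i, ∑ c, φ i c = 1) :
    ∑ a, q a * ∑ c, φ (a k) c * u (Function.update a k c) ≤ ∑ a, q a * u a := by
  classical
  have hdecomp : ∀ a : (j : Fin N) → A j,
      ∑ c, φ (a k) c * u (Function.update a k c)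
        = ∑ g : A k → A k, (∏ j, φ j (g j)) * u (Function.update a k (g (a k))) :=
    fun a => kernel_decomp φ hφ1 (a k) (fun c => u (Function.update a k c))
  have hw1 : ∑ g : A k → A k, ∏ j, φ j (g j) = 1 := by
    rw [← Fintype.piFinset_univ, ← Finset.prod_univ_sum]
    simp [hφ1]
  calc ∑ a, q a * ∑ c, φ (a k) c * u (Function.update a k c)
      = ∑ g : A k → A k, (∏ j, φ j (g j)) *
          ∑ a, q a * u (Function.update a k (g (a k))) := by
        simp only [hdecomp, Finset.mul_sum]
        rw [Finset.sum_comm]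
        refine Finset.sum_congr rfl fun g _ => Finset.sum_congr rfl fun a _ => by ring
    _ ≤ ∑ g : A k → A k, (∏ j, φ j (g j)) * ∑ a, q a * u a := by
        refine Finset.sum_le_sum fun g _ => ?_
        exact mul_le_mul_of_nonneg_left (hCE g)
          (Finset.prod_nonneg fun j _ => hφ0 j (g j))
    _ = ∑ a, q a * u a := by rw [← Finset.sum_mul, hw1, one_mul]


section PCEConstruction

variable [∀ j, Nonempty (A j)]

/-- Scalarized (all-ones weights) stage payoff given continuation values `W`. -/
noncomputable def stagePay (G : MOMG N M H S A) (W : Fin N → S → ℝ) (h : ℕ) (s : S)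
    (k : Fin N) (a : (j : Fin N) → A j) : ℝ :=
  if hh : h < H then
    (∑ i, G.r k ⟨h, hh⟩ s a i) + ∑ s', G.P ⟨h, hh⟩ s a s' * W k s'
  else 0

/-- A chosen correlated equilibrium of the finite game with payoffs `u`. -/
noncomputable def ceOf (hN : 1 ≤ N) (u : Fin N → ((j : Fin N) → A j) → ℝ) :
    ((j : Fin N) → A j) → ℝ :=
  Classical.choose (exists_CE hN u)

theorem ceOf_spec (hN : 1 ≤ N) (u : Fin N → ((j : Fin N) → A j) → ℝ) :
    (∀ a, 0 ≤ ceOf hN u a) ∧ ∑ a, ceOf hN u a = 1 ∧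
      ∀ (k : Fin N) (g : A k → A k),
        ∑ a, ceOf hN u a * u k (Function.update a k (g (a k))) ≤
          ∑ a, ceOf hN u a * u k a :=
  Classical.choose_spec (exists_CE hN u)

/-- Backward-induction values: `Fval t k s` is agent `k`'s scalarized value with
`t` steps remaining at state `s`. -/
noncomputable def Fval (hN : 1 ≤ N) (G : MOMG N M H S A) : ℕ → Fin N → S → ℝ
  | 0 => fun _ _ => 0
  | (t+1) => fun k s =>
      ∑ a, ceOf hN (fun k' a' => stagePay G (Fval hN G t) (H - (t+1)) s k' a') a *
        stagePay G (Fval hN G t) (H - (t+1)) s k a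

/-- The stage correlated equilibrium with `t + 1` steps remaining. -/
noncomputable def Qpol (hN : 1 ≤ N) (G : MOMG N M H S A) (t : ℕ) (s : S) :
    ((j : Fin N) → A j) → ℝ :=
  ceOf hN (fun k' a' => stagePay G (Fval hN G t) (H - (t+1)) s k' a')

/-- The Markov correlated policy built by backward induction. -/
noncomputable def sigPol (hN : 1 ≤ N) (G : MOMG N M H S A) :
    (h : Fin H) → Hist S ((j : Fin N) → A j) h.1 → ((j : Fin N) → A j) → ℝ :=
  fun h hist a => Qpol hN G (H - h.1 - 1) (lastState h.1 hist) a

theorem sum_swap_step {M : ℕ} {S JA : Type} [Fintype S] [Fintype JA]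
    (σ0 : JA → ℝ) (r0 : JA → Fin M → ℝ) (P0 : JA → S → ℝ) (V0 : JA → S → Fin M → ℝ) :
    ∑ i, ∑ a, σ0 a * (r0 a i + ∑ s', P0 a s' * V0 a s' i)
      = ∑ a, σ0 a * ((∑ i, r0 a i) + ∑ s', P0 a s' * (∑ i, V0 a s' i)) := by
  rw [Finset.sum_comm]
  refine Finset.sum_congr rfl fun a _ => ?_
  rw [← Finset.mul_sum]
  congr 1
  rw [Finset.sum_add_distrib]
  congr 1
  rw [Finset.sum_comm]
  exact Finset.sum_congr rfl fun s' _ => by rw [← Finset.mul_sum]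

theorem stagePay_eq (G : MOMG N M H S A) (W : Fin N → S → ℝ) {h t : ℕ}
    (hlt : h < H) (hsum : h + (t+1) = H) (s : S) (k : Fin N)
    (a : (j : Fin N) → A j) :
    stagePay G W (H - (t+1)) s k a
      = (∑ i, G.r k ⟨h, hlt⟩ s a i) + ∑ s', G.P ⟨h, hlt⟩ s a s' * W k s' := by
  have h1 : H - (t+1) = h := by omega
  rw [stagePay, h1, dif_pos hlt]

/-- Value of the constructed policy equals the backward-induction value. -/
theorem val_eq (hN : 1 ≤ N) (G : MOMG N M H S A) (k : Fin N) :
    ∀ (t h : ℕ), h + t = H → ∀ hist : Hist S ((j : Fin N) → A j) h,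
      ∑ i, VvecH G k (sigPol hN G) h hist i = Fval hN G t k (lastState h hist) := by
  intro t
  induction t with
  | zero =>
    intro h hh hist
    have hnot : ¬ h < H := by omega
    have : ∀ i : Fin M, VvecH G k (sigPol hN G) h hist i = 0 := by
      intro i; rw [VvecH, dif_neg hnot]
    simp [this, Fval]
  | succ t ih =>
    intro h hh hist
    have hlt : h < H := by omega
    set s := lastState h hist with hs
    have hunf : ∀ i : Fin M, VvecH G k (sigPol hN G) h hist i
        = ∑ a, sigPol hN G ⟨h, hlt⟩ hist a *
            (G.r k ⟨h, hlt⟩ s a i +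
              ∑ s', G.P ⟨h, hlt⟩ s a s' *
                VvecH G k (sigPol hN G) (h + 1) (hist, a, s') i) := by
      intro i; rw [VvecH, dif_pos hlt]
    calc ∑ i, VvecH G k (sigPol hN G) h hist i
        = ∑ a, sigPol hN G ⟨h, hlt⟩ hist a *
            ((∑ i, G.r k ⟨h, hlt⟩ s a i) +
              ∑ s', G.P ⟨h, hlt⟩ s a s' *
                (∑ i, VvecH G k (sigPol hN G) (h + 1) (hist, a, s') i)) := by
          rw [Finset.sum_congr rfl fun i _ => hunf i]
          exact sum_swap_step _ _ _ _
      _ = ∑ a, Qpol hN G t s a * stagePay G (Fval hN G t) (H - (t+1)) s k a := by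
          refine Finset.sum_congr rfl fun a _ => ?_
          have h2 : sigPol hN G ⟨h, hlt⟩ hist a = Qpol hN G t s a := by
            have h3 : H - h - 1 = t := by omega
            rw [sigPol]
            simp only [← hs, h3]
          rw [h2, stagePay_eq G _ hlt hh]
          congr 2
          refine Finset.sum_congr rfl fun s' _ => ?_
          rw [ih (h+1) (by omega) (hist, a, s')]
          rfl
      _ = Fval hN G (t+1) k s := rfl

/-- Value of any unilaterally modified policy is at most the backward-induction
value. -/
theorem val_mod_le (hN : 1 ≤ N) (G : MOMG N M H S A) (k : Fin N)
    (φ : (h : Fin H) → Hist S ((j' : Fin N) → A j') h.1 → A k → A k → ℝ)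
    (hφ : IsModification φ) :
    ∀ (t h : ℕ), h + t = H → ∀ hist : Hist S ((j : Fin N) → A j) h,
      ∑ i, VvecH G k (modifyPolicy k (sigPol hN G) φ) h hist i
        ≤ Fval hN G t k (lastState h hist) := by
  classical
  intro t
  induction t with
  | zero =>
    intro h hh hist
    have hnot : ¬ h < H := by omega
    have : ∀ i : Fin M, VvecH G k (modifyPolicy k (sigPol hN G) φ) h hist i = 0 := by
      intro i; rw [VvecH, dif_neg hnot]
    simp [this, Fval]
  | succ t ih =>
    intro h hh hist
    have hlt : h < H := by omega
    set s := lastState h hist with hs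
    set mp : ((j : Fin N) → A j) → ℝ :=
      modifyPolicy k (sigPol hN G) φ ⟨h, hlt⟩ hist with hmp
    have hσQ : ∀ x, sigPol hN G ⟨h, hlt⟩ hist x = Qpol hN G t s x := by
      intro x
      have h3 : H - h - 1 = t := by omega
      rw [sigPol]
      simp only [← hs, h3]
    have hQspec := ceOf_spec (A := A) hN
      (fun k' a' => stagePay G (Fval hN G t) (H - (t+1)) s k' a')
    have hQ0 : ∀ x, 0 ≤ Qpol hN G t s x := hQspec.1
    have hmp0 : ∀ a, 0 ≤ mp a := by
      intro a
      rw [hmp, modifyPolicy]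
      refine Finset.sum_nonneg fun b _ => ?_
      have := (hφ ⟨h, hlt⟩ hist b).1 (a k)
      have h4 := hQ0 (Function.update a k b)
      rw [← hσQ (Function.update a k b)] at h4
      exact mul_nonneg h4 this
    have hunf : ∀ i : Fin M, VvecH G k (modifyPolicy k (sigPol hN G) φ) h hist i
        = ∑ a, mp a *
            (G.r k ⟨h, hlt⟩ s a i +
              ∑ s', G.P ⟨h, hlt⟩ s a s' *
                VvecH G k (modifyPolicy k (sigPol hN G) φ) (h + 1) (hist, a, s') i) := by
      intro i; rw [VvecH, dif_pos hlt]
    have hg := fun a => stagePay_eq G (Fval hN G t) hlt hh s k a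
    calc ∑ i, VvecH G k (modifyPolicy k (sigPol hN G) φ) h hist i
        = ∑ a, mp a *
            ((∑ i, G.r k ⟨h, hlt⟩ s a i) +
              ∑ s', G.P ⟨h, hlt⟩ s a s' *
                (∑ i, VvecH G k (modifyPolicy k (sigPol hN G) φ) (h + 1) (hist, a, s') i)) := by
          rw [Finset.sum_congr rfl fun i _ => hunf i]
          exact sum_swap_step _ _ _ _
      _ ≤ ∑ a, mp a * stagePay G (Fval hN G t) (H - (t+1)) s k a := by
          refine Finset.sum_le_sum fun a _ => ?_
          refine mul_le_mul_of_nonneg_left ?_ (hmp0 a)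
          rw [hg a]
          refine add_le_add le_rfl (Finset.sum_le_sum fun s' _ => ?_)
          exact mul_le_mul_of_nonneg_left (ih (h+1) (by omega) (hist, a, s'))
            (G.P_nonneg ⟨h, hlt⟩ s a s')
      _ = ∑ a, Qpol hN G t s a *
            ∑ c, φ ⟨h, hlt⟩ hist (a k) c *
              stagePay G (Fval hN G t) (H - (t+1)) s k (Function.update a k c) := by
          have hexp : ∀ a, mp a * stagePay G (Fval hN G t) (H - (t+1)) s k a
              = ∑ b, Qpol hN G t s (Function.update a k b) * φ ⟨h, hlt⟩ hist b (a k) *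
                  stagePay G (Fval hN G t) (H - (t+1)) s k a := by
            intro a
            rw [hmp, modifyPolicy, Finset.sum_mul]
            refine Finset.sum_congr rfl fun b _ => ?_
            rw [hσQ (Function.update a k b)]
          rw [Finset.sum_congr rfl fun a _ => hexp a]
          rw [sum_update_reindex k (fun a b =>
            Qpol hN G t s (Function.update a k b) * φ ⟨h, hlt⟩ hist b (a k) *
              stagePay G (Fval hN G t) (H - (t+1)) s k a)]
          refine Finset.sum_congr rfl fun a _ => ?_
          rw [Finset.mul_sum]
          refine Finset.sum_congr rfl fun b _ => ?_
          rw [Function.update_idem, Function.update_eq_self, Function.update_self]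
          ring
      _ ≤ ∑ a, Qpol hN G t s a * stagePay G (Fval hN G t) (H - (t+1)) s k a := by
          refine CE_kernel (Qpol hN G t s) hQ0
            (fun a => stagePay G (Fval hN G t) (H - (t+1)) s k a) k
            (fun g => hQspec.2.2 k g) (φ ⟨h, hlt⟩ hist)
            (fun i c => (hφ ⟨h, hlt⟩ hist i).1 c)
            (fun i => (hφ ⟨h, hlt⟩ hist i).2)
      _ = Fval hN G (t+1) k s := rfl

end PCEConstruction

/-- **Existence of a Pareto Correlated Equilibrium.** Every finite
multi-objective Markov game has a joint (history-dependent, possibly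
correlated) policy `σ` such that for every agent `j` and every stochastic
modification `φ`, `V_{j,1}^{φ ∘ σ}(s_1)` does not Pareto dominate
`V_{j,1}^σ(s_1)`. -/
theorem exists_PCE {N M H : ℕ} (hN : 1 ≤ N) (hH : 1 ≤ H)
    (S : Type) (A : Fin N → Type) [Fintype S] [Nonempty S]
    [∀ j, Fintype (A j)] [∀ j, Nonempty (A j)]
    (G : MOMG N M H S A) (s1 : S) :
    ∃ σ : (h : Fin H) → Hist S ((j : Fin N) → A j) h.1 → ((j : Fin N) → A j) → ℝ,
      IsHistJointPolicy σ ∧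
      ∀ j, ∀ φ : (h : Fin H) → Hist S ((j' : Fin N) → A j') h.1 → A j → A j → ℝ,
        IsModification φ →
        ¬ ParetoDom (fun i => VvecH G j (modifyPolicy j σ φ) 0 s1 i)
          (fun i => VvecH G j σ 0 s1 i) := by
  classical
  refine ⟨sigPol hN G, ?_, ?_⟩
  · intro h hist
    have hspec := ceOf_spec (A := A) hN
      (fun k' a' => stagePay G (Fval hN G (H - h.1 - 1))
        (H - (H - h.1 - 1 + 1)) (lastState h.1 hist) k' a')
    exact ⟨fun a => hspec.1 a, hspec.2.1⟩
  · intro j φ hφ hdom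
    obtain ⟨hle, i0, hi0⟩ := hdom
    have hv := val_eq hN G j H 0 (by omega) s1
    have hu := val_mod_le hN G j φ hφ H 0 (by omega) s1
    have hstrict : ∑ i, VvecH G j (sigPol hN G) 0 s1 i
        < ∑ i, VvecH G j (modifyPolicy j (sigPol hN G) φ) 0 s1 i :=
      Finset.sum_lt_sum (fun i _ => hle i) ⟨i0, Finset.mem_univ i0, hi0⟩
    have hls : lastState (S := S) (JA := (j' : Fin N) → A j') 0 s1 = s1 := rfl
    rw [hls] at hv hu
    linarith
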